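/- Let a ≥ 0, n ∈ ℕ, r ∈ ℕ₀, and let T_{n,r}^a(x) = K_n^a(t^r;x) denote the r-th order moment of the generalized Baskakov Kantorovich operator. Then for all x ≥ 0, T_{n,r}^a(x) = (1/(r+1))·Σ_{j=0}^{r} C(r+1,j)·(n+1)^{j−r}·ν_{n,j}^a(x), where ν_{n,j}^a(x) = Σ_{k=0}^{∞} W_{n,k}^a(x)·(k/(n+1))^j. In particular, T_{n,0}^a(x) = 1, T_{n,1}^a(x) = (1/(n+1))·(nx + ax/(1+x) + 1/2), and T_{n,2}^a(x) = (1/(n+1)²)·(n²x² + n(x² + 2x + 2ax²/(1+x)) + a²x²/(1+x)² + 2ax/(1+x) + 1/3). -/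

import Mathlib

open MeasureTheory Filter

noncomputable section

/-- Rising factorial `(n)_i = n(n+1)⋯(n+i-1)`, with `(n)_0 = 1`. -/
def risingFac (n : ℕ) : ℕ → ℝ
  | 0 => 1
  | i + 1 => risingFac n i * ((n : ℝ) + i)

/-- `P_k(n,a) = Σ_{i=0}^{k} C(k,i) (n)_i a^(k-i)`. -/
def Pba (k n : ℕ) (a : ℝ) : ℝ :=
  ∑ i ∈ Finset.range (k + 1), (k.choose i : ℝ) * risingFac n i * a ^ (k - i)

/-- Generalized Baskakov basis function `W_{n,k}^a(x)`. -/
def Wgb (a : ℝ) (n k : ℕ) (x : ℝ) : ℝ :=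
  Real.exp (-(a * x) / (1 + x)) * (Pba k n a / (Nat.factorial k : ℝ)) * x ^ k /
    (1 + x) ^ (n + k)

/-- Generalized Baskakov–Kantorovich operator `K_n^a(f;x)`. -/
def Kgb (a : ℝ) (n : ℕ) (f : ℝ → ℝ) (x : ℝ) : ℝ :=
  ((n : ℝ) + 1) * ∑' k : ℕ,
    Wgb a n k x * ∫ t in ((k : ℝ) / ((n : ℝ) + 1))..(((k : ℝ) + 1) / ((n : ℝ) + 1)), f t


/-- `r`-th order moment `ν_{n,r}^a(x)` of the generalized Baskakov operator. -/
def nuMoment (a : ℝ) (n r : ℕ) (x : ℝ) : ℝ :=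
  ∑' k : ℕ, Wgb a n k x * ((k : ℝ) / ((n : ℝ) + 1)) ^ r

/-- `r`-th order moment `T_{n,r}^a(x) = K_n^a(t^r;x)` of the Kantorovich operator. -/
def TMoment (a : ℝ) (n r : ℕ) (x : ℝ) : ℝ :=
  Kgb a n (fun t => t ^ r) x

lemma risingFac_succ (n i : ℕ) : risingFac n (i+1) = risingFac n i * ((n:ℝ) + i) := rfl

lemma risingFac_succ_eq (n i : ℕ) : risingFac n (i+1) = (n:ℝ) * risingFac (n+1) i := by
  induction i with
  | zero => simp [risingFac]
  | succ i ih =>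
      rw [risingFac_succ, ih, risingFac_succ]
      push_cast
      ring

lemma risingFac_nonneg (n i : ℕ) : 0 ≤ risingFac n i := by
  induction i with
  | zero => norm_num [risingFac]
  | succ i ih => rw [risingFac_succ]; positivity

lemma risingFac_zero_eval (i : ℕ) : risingFac 0 (i+1) = 0 := by
  induction i with
  | zero => simp [risingFac]
  | succ i ih => rw [risingFac_succ, ih]; ring

lemma nat_choose_aux (m i : ℕ) : (m + 1 + i) * Nat.choose (i + m) m = (i + 1) * Nat.choose (i + 1 + m) m := by
  have h1 : (i + m).choose m = (i + m).choose i := Nat.choose_symm_add.symm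
  have h2 : (i + 1 + m).choose m = (i + 1 + m).choose (i + 1) := by
    have : i + 1 + m = (i + 1) + m := rfl
    rw [this, Nat.choose_symm_add]
  rw [h1, h2]
  have this' := Nat.add_one_mul_choose_eq (i + m) i
  have e1 : m + 1 + i = i + m + 1 := by omega
  have e2 : i + 1 + m = i + m + 1 := by omega
  rw [e1, e2, this', Nat.mul_comm]

lemma risingFac_choose (m i : ℕ) :
    risingFac (m+1) i = (Nat.factorial i : ℝ) * ((i + m).choose m : ℝ) := by
  induction i with
  | zero => simp [risingFac]
  | succ i ih =>
      rw [risingFac_succ, ih]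
      have h := nat_choose_aux m i
      have h' : ((m:ℝ) + 1 + i) * ((i + m).choose m : ℝ) = ((i:ℝ) + 1) * (((i + 1 + m).choose m : ℝ)) := by
        exact_mod_cast congrArg (Nat.cast (R := ℝ)) h
      rw [Nat.factorial_succ]
      push_cast at h' ⊢
      nlinarith [h']

/-- `fA n y s i = i^s (n)_i / i! y^i` -/
def fA (n : ℕ) (y : ℝ) (s i : ℕ) : ℝ :=
  (i:ℝ)^s * (risingFac n i / (Nat.factorial i : ℝ)) * y^i

/-- `fB b t j = j^t b^j / j!` -/
def fB (b : ℝ) (t j : ℕ) : ℝ := (j:ℝ)^t * (b^j / (Nat.factorial j : ℝ))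

lemma hasSum_A0 (n : ℕ) {y : ℝ} (hy : |y| < 1) :
    HasSum (fA n y 0) (1 / (1-y)^n) := by
  cases n with
  | zero =>
      have : fA 0 y 0 = fun i => if i = 0 then (1:ℝ) else 0 := by
        funext i
        cases i with
        | zero => simp [fA, risingFac]
        | succ i => simp [fA, risingFac_zero_eval]
      rw [this]
      simpa using hasSum_ite_eq 0 (1:ℝ)
  | succ m =>
      have h := hasSum_choose_mul_geometric_of_norm_lt_one (𝕜 := ℝ) m
        (by rwa [Real.norm_eq_abs])
      refine h.congr_fun fun i => ?_
      unfold fA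
      rw [risingFac_choose]
      have : (Nat.factorial i : ℝ) ≠ 0 := by positivity
      field_simp

lemma hasSum_B0 (b : ℝ) : HasSum (fun j => b^j / (Nat.factorial j : ℝ)) (Real.exp b) := by
  have := NormedSpace.expSeries_div_hasSum_exp (𝔸 := ℝ) b
  rwa [← Real.exp_eq_exp_ℝ] at this

lemma summable_A (y : ℝ) (hy : |y| < 1) : ∀ s n : ℕ, Summable (fA n y s) := by
  intro s
  induction s using Nat.strong_induction_on with
  | _ s ih =>
      intro n
      cases s with
      | zero => exact (hasSum_A0 n hy).summable
      | succ s =>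
          rw [← summable_nat_add_iff 1]
          have key : (fun i => fA n y (s+1) (i+1)) =
              fun i => ∑ t ∈ Finset.range (s+1),
                ((s.choose t : ℝ) * ((n:ℝ) * y)) * fA (n+1) y t i := by
            funext i
            unfold fA
            rw [risingFac_succ_eq, Nat.factorial_succ]
            have h1 : ((i:ℝ)+1)^s = ∑ t ∈ Finset.range (s+1), (i:ℝ)^t * (s.choose t : ℝ) := by
              have := add_pow (i:ℝ) 1 s
              simpa using this
            push_cast
            rw [pow_succ, h1, Finset.sum_mul, Finset.sum_mul, Finset.sum_mul]
            apply Finset.sum_congr rfl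
            intro t _
            have hi1 : ((i:ℝ)+1) ≠ 0 := by positivity
            have hfact : (Nat.factorial i : ℝ) ≠ 0 := by positivity
            field_simp
            ring
          rw [key]
          apply summable_sum
          intro t ht
          exact (ih t (Finset.mem_range.mp ht) (n+1)).mul_left _

lemma summable_B (b : ℝ) : ∀ t : ℕ, Summable (fB b t) := by
  intro t
  induction t using Nat.strong_induction_on with
  | _ t ih =>
      cases t with
      | zero =>
          have := (hasSum_B0 b).summable
          apply this.congr
          intro j; simp [fB]
      | succ t =>
          rw [← summable_nat_add_iff 1]
          have key : (fun j => fB b (t+1) (j+1)) =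
              fun j => ∑ u ∈ Finset.range (t+1), ((t.choose u : ℝ) * b) * fB b u j := by
            funext j
            unfold fB
            rw [Nat.factorial_succ]
            have h1 : ((j:ℝ)+1)^t = ∑ u ∈ Finset.range (t+1), (j:ℝ)^u * (t.choose u : ℝ) := by
              have := add_pow (j:ℝ) 1 t
              simpa using this
            push_cast
            rw [pow_succ, h1, Finset.sum_mul, Finset.sum_mul]
            apply Finset.sum_congr rfl
            intro u _
            have hj1 : ((j:ℝ)+1) ≠ 0 := by positivity
            have hfact : (Nat.factorial j : ℝ) ≠ 0 := by positivity
            field_simp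
            ring
          rw [key]
          apply summable_sum
          intro u hu
          exact (ih u (Finset.mem_range.mp hu)).mul_left _

lemma hasSum_A1 (n : ℕ) {y : ℝ} (hy : |y| < 1) :
    HasSum (fA n y 1) ((n:ℝ) * y / (1-y)^(n+1)) := by
  have h : HasSum (fun i : ℕ => fA n y 1 (i+1)) ((n:ℝ) * y / (1-y)^(n+1)) := by
    have h := (hasSum_A0 (n+1) hy).mul_left ((n:ℝ) * y)
    rw [mul_one_div] at h
    refine h.congr_fun fun i => ?_
    unfold fA
    rw [risingFac_succ_eq, Nat.factorial_succ]
    have hi1 : ((i:ℝ)+1) ≠ 0 := by positivity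
    have hfact : (Nat.factorial i : ℝ) ≠ 0 := by positivity
    push_cast
    field_simp
    ring
  have h1 := (hasSum_nat_add_iff (f := fA n y 1) 1).mp h
  have h0 : fA n y 1 0 = 0 := by simp [fA]
  rw [Finset.sum_range_one, h0, add_zero] at h1
  exact h1

lemma hasSum_A2 (n : ℕ) {y : ℝ} (hy : |y| < 1) :
    HasSum (fA n y 2)
      ((n:ℝ) * ((n:ℝ)+1) * y^2 / (1-y)^(n+2) + (n:ℝ) * y / (1-y)^(n+1)) := by
  have key : HasSum (fun i : ℕ => (i:ℝ) * ((i:ℝ) - 1) * (risingFac n i / (Nat.factorial i : ℝ)) * y^i)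
      ((n:ℝ) * ((n:ℝ)+1) * y^2 / (1-y)^(n+2)) := by
    have h : HasSum (fun i : ℕ =>
        (((i:ℕ)+2 : ℕ):ℝ) * ((((i:ℕ)+2:ℕ):ℝ) - 1) * (risingFac n (i+2) / (Nat.factorial (i+2) : ℝ)) * y^(i+2))
        ((n:ℝ) * ((n:ℝ)+1) * y^2 / (1-y)^(n+2)) := by
      have h := (hasSum_A0 (n+2) hy).mul_left ((n:ℝ) * ((n:ℝ)+1) * y^2)
      rw [mul_one_div] at h
      refine h.congr_fun fun i => ?_
      unfold fA
      have e1 : risingFac n (i+2) = (n:ℝ) * ((n:ℝ)+1) * risingFac (n+2) i := by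
        rw [risingFac_succ_eq, risingFac_succ_eq]
        push_cast
        ring
      rw [e1, Nat.factorial_succ, Nat.factorial_succ]
      have hi1 : ((i:ℝ)+1) ≠ 0 := by positivity
      have hi2 : ((i:ℝ)+1+1) ≠ 0 := by positivity
      have hfact : (Nat.factorial i : ℝ) ≠ 0 := by positivity
      push_cast
      field_simp
      ring
    have h1 := (hasSum_nat_add_iff
      (f := fun i : ℕ => (i:ℝ) * ((i:ℝ) - 1) * (risingFac n i / (Nat.factorial i : ℝ)) * y^i) 2).mp h
    have h00 : ((0:ℕ):ℝ) * (((0:ℕ):ℝ) - 1) * (risingFac n 0 / (Nat.factorial 0 : ℝ)) * y^(0:ℕ) = 0 := by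
      simp
    have h01 : ((1:ℕ):ℝ) * (((1:ℕ):ℝ) - 1) * (risingFac n 1 / (Nat.factorial 1 : ℝ)) * y^(1:ℕ) = 0 := by
      simp
    rw [show Finset.range 2 = {0, 1} by rfl] at h1
    rw [Finset.sum_insert (by simp), Finset.sum_singleton] at h1
    rw [h00, h01, add_zero, add_zero] at h1
    exact h1
  have hadd := key.add (hasSum_A1 n hy)
  refine hadd.congr_fun fun i => ?_
  unfold fA
  ring

lemma hasSum_B1 (b : ℝ) : HasSum (fB b 1) (b * Real.exp b) := by
  have h : HasSum (fun j : ℕ => fB b 1 (j+1)) (b * Real.exp b) := by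
    have h := (hasSum_B0 b).mul_left b
    refine h.congr_fun fun j => ?_
    unfold fB
    rw [Nat.factorial_succ]
    have hj1 : ((j:ℝ)+1) ≠ 0 := by positivity
    have hfact : (Nat.factorial j : ℝ) ≠ 0 := by positivity
    push_cast
    field_simp
    ring
  have h1 := (hasSum_nat_add_iff (f := fB b 1) 1).mp h
  have h0 : fB b 1 0 = 0 := by simp [fB]
  rw [Finset.sum_range_one, h0, add_zero] at h1
  exact h1

lemma hasSum_B2 (b : ℝ) : HasSum (fB b 2) ((b^2 + b) * Real.exp b) := by
  have key : HasSum (fun j : ℕ => (j:ℝ) * ((j:ℝ) - 1) * (b^j / (Nat.factorial j : ℝ)))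
      (b^2 * Real.exp b) := by
    have h : HasSum (fun j : ℕ =>
        ((((j:ℕ)+2:ℕ)):ℝ) * (((((j:ℕ)+2:ℕ)):ℝ) - 1) * (b^(j+2) / (Nat.factorial (j+2) : ℝ)))
        (b^2 * Real.exp b) := by
      have h := (hasSum_B0 b).mul_left (b^2)
      refine h.congr_fun fun j => ?_
      rw [Nat.factorial_succ, Nat.factorial_succ]
      have hj1 : ((j:ℝ)+1) ≠ 0 := by positivity
      have hj2 : ((j:ℝ)+1+1) ≠ 0 := by positivity
      have hfact : (Nat.factorial j : ℝ) ≠ 0 := by positivity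
      push_cast
      field_simp
      ring
    have h1 := (hasSum_nat_add_iff
      (f := fun j : ℕ => (j:ℝ) * ((j:ℝ) - 1) * (b^j / (Nat.factorial j : ℝ))) 2).mp h
    have h00 : ((0:ℕ):ℝ) * (((0:ℕ):ℝ) - 1) * (b^(0:ℕ) / (Nat.factorial 0 : ℝ)) = 0 := by simp
    have h01 : ((1:ℕ):ℝ) * (((1:ℕ):ℝ) - 1) * (b^(1:ℕ) / (Nat.factorial 1 : ℝ)) = 0 := by simp
    rw [show Finset.range 2 = {0, 1} by rfl] at h1
    rw [Finset.sum_insert (by simp), Finset.sum_singleton] at h1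
    rw [h00, h01, add_zero, add_zero] at h1
    exact h1
  have hadd := key.add (hasSum_B1 b)
  have goal2 : HasSum (fB b 2) (b^2 * Real.exp b + b * Real.exp b) := by
    refine hadd.congr_fun fun j => ?_
    unfold fB
    ring
  convert goal2 using 1
  ring

lemma hasSum_cauchy (u v : ℕ → ℝ) (hu : Summable u) (hv : Summable v) :
    HasSum (fun k => ∑ p ∈ Finset.HasAntidiagonal.antidiagonal k, u p.1 * v p.2)
      ((∑' i, u i) * (∑' j, v j)) := by
  have hu' : Summable fun i => ‖u i‖ := by
    simpa [Real.norm_eq_abs] using summable_abs_iff.mpr hu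
  have hv' : Summable fun j => ‖v j‖ := by
    simpa [Real.norm_eq_abs] using summable_abs_iff.mpr hv
  have hsum : Summable fun k : ℕ => ∑ p ∈ Finset.HasAntidiagonal.antidiagonal k, u p.1 * v p.2 :=
    (summable_norm_sum_mul_antidiagonal_of_summable_norm hu' hv').of_norm
  have heq := tsum_mul_tsum_eq_tsum_sum_antidiagonal_of_summable_norm hu' hv'
  rw [heq]
  exact hsum.hasSum

lemma Pba_antidiag (n k : ℕ) (a y : ℝ) :
    (Pba k n a / (Nat.factorial k : ℝ)) * y^k =
      ∑ p ∈ Finset.HasAntidiagonal.antidiagonal k, fA n y 0 p.1 * fB (a*y) 0 p.2 := by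
  rw [Finset.Nat.sum_antidiagonal_eq_sum_range_succ_mk]
  unfold Pba fA fB
  rw [Finset.sum_div, Finset.sum_mul]
  apply Finset.sum_congr rfl
  intro i hi
  have hik : i ≤ k := Nat.lt_succ_iff.mp (Finset.mem_range.mp hi)
  have hchoose : (k.choose i : ℝ) * (Nat.factorial i : ℝ) * (Nat.factorial (k-i) : ℝ)
      = (Nat.factorial k : ℝ) := by
    exact_mod_cast congrArg (Nat.cast (R := ℝ)) (Nat.choose_mul_factorial_mul_factorial hik)
  have hyk : y^k = y^i * y^(k-i) := by
    rw [← pow_add, Nat.add_sub_cancel' hik]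
  have hab : (a*y)^(k-i) = a^(k-i) * y^(k-i) := mul_pow a y (k-i)
  have hfi : (Nat.factorial i : ℝ) ≠ 0 := by positivity
  have hfki : (Nat.factorial (k-i) : ℝ) ≠ 0 := by positivity
  have hfk : (Nat.factorial k : ℝ) ≠ 0 := by positivity
  rw [hyk, hab]
  simp only [pow_zero, one_mul]
  field_simp
  rw [← hchoose]
  ring

lemma Pba_key (n m k : ℕ) (a y : ℝ) :
    (k:ℝ)^m * ((Pba k n a / (Nat.factorial k : ℝ)) * y^k) =
      ∑ s ∈ Finset.range (m+1), (m.choose s : ℝ) *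
        (∑ p ∈ Finset.HasAntidiagonal.antidiagonal k, fA n y s p.1 * fB (a*y) (m-s) p.2) := by
  have step1 : ∀ s, (m.choose s : ℝ) *
        (∑ p ∈ Finset.HasAntidiagonal.antidiagonal k, fA n y s p.1 * fB (a*y) (m-s) p.2) =
      ∑ p ∈ Finset.HasAntidiagonal.antidiagonal k,
        ((p.1:ℝ)^s * (p.2:ℝ)^(m-s) * (m.choose s : ℝ)) *
          (fA n y 0 p.1 * fB (a*y) 0 p.2) := by
    intro s
    rw [Finset.mul_sum]
    apply Finset.sum_congr rfl
    intro p _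
    unfold fA fB
    ring
  calc (k:ℝ)^m * ((Pba k n a / (Nat.factorial k : ℝ)) * y^k)
      = ∑ p ∈ Finset.HasAntidiagonal.antidiagonal k, (k:ℝ)^m * (fA n y 0 p.1 * fB (a*y) 0 p.2) := by
        rw [Pba_antidiag, Finset.mul_sum]
    _ = ∑ p ∈ Finset.HasAntidiagonal.antidiagonal k, ∑ s ∈ Finset.range (m+1),
        ((p.1:ℝ)^s * (p.2:ℝ)^(m-s) * (m.choose s : ℝ)) * (fA n y 0 p.1 * fB (a*y) 0 p.2) := by
        apply Finset.sum_congr rfl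
        intro p hp
        have hpk : p.1 + p.2 = k := Finset.HasAntidiagonal.mem_antidiagonal.mp hp
        have : ((p.1:ℝ) + (p.2:ℝ))^m = ∑ s ∈ Finset.range (m+1),
            (p.1:ℝ)^s * (p.2:ℝ)^(m-s) * (m.choose s : ℝ) := add_pow _ _ m
        have hk : (k:ℝ)^m = ∑ s ∈ Finset.range (m+1),
            (p.1:ℝ)^s * (p.2:ℝ)^(m-s) * (m.choose s : ℝ) := by
          rw [← this, ← hpk]
          push_cast
          ring
        rw [hk, Finset.sum_mul]
    _ = ∑ s ∈ Finset.range (m+1), ∑ p ∈ Finset.HasAntidiagonal.antidiagonal k,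
        ((p.1:ℝ)^s * (p.2:ℝ)^(m-s) * (m.choose s : ℝ)) * (fA n y 0 p.1 * fB (a*y) 0 p.2) :=
        Finset.sum_comm
    _ = _ := by
        apply Finset.sum_congr rfl
        intro s _
        rw [step1]

lemma hasSum_master (n m : ℕ) (a : ℝ) {y : ℝ} (hy : |y| < 1) :
    HasSum (fun k : ℕ => (k:ℝ)^m * ((Pba k n a / (Nat.factorial k : ℝ)) * y^k))
      (∑ s ∈ Finset.range (m+1), (m.choose s : ℝ) *
        ((∑' i, fA n y s i) * (∑' j, fB (a*y) (m-s) j))) := by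
  have h : HasSum (fun k => ∑ s ∈ Finset.range (m+1), (m.choose s : ℝ) *
      (∑ p ∈ Finset.HasAntidiagonal.antidiagonal k, fA n y s p.1 * fB (a*y) (m-s) p.2))
      (∑ s ∈ Finset.range (m+1), (m.choose s : ℝ) *
        ((∑' i, fA n y s i) * (∑' j, fB (a*y) (m-s) j))) := by
    apply hasSum_sum
    intro s _
    exact (hasSum_cauchy _ _ (summable_A y hy s n) (summable_B (a*y) (m-s))).mul_left _
  refine h.congr_fun fun k => ?_
  exact Pba_key n m k a y

lemma one_add_pos {x : ℝ} (hx : 0 ≤ x) : (0:ℝ) < 1 + x := by linarith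

lemma yabs_lt {x : ℝ} (hx : 0 ≤ x) : |x / (1+x)| < 1 := by
  have h1 : (0:ℝ) < 1 + x := one_add_pos hx
  rw [abs_of_nonneg (by positivity)]
  rw [div_lt_one h1]
  linarith

lemma one_sub_y {x : ℝ} (hx : 0 ≤ x) : 1 - x/(1+x) = 1/(1+x) := by
  have h1 : (1:ℝ) + x ≠ 0 := by positivity
  field_simp
  ring

lemma Wgb_eq (a : ℝ) (n k : ℕ) (x : ℝ) (hx : 0 ≤ x) :
    Wgb a n k x = Real.exp (-(a * (x/(1+x)))) *
      ((Pba k n a / (Nat.factorial k : ℝ)) * (x/(1+x))^k) * (1/(1+x))^n := by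
  have h1 : (1:ℝ) + x ≠ 0 := by positivity
  unfold Wgb
  have he : -(a * x) / (1 + x) = -(a * (x/(1+x))) := by
    field_simp
  rw [he, pow_add, div_pow, div_pow, one_pow]
  field_simp

lemma hasSum_W (a : ℝ) (n m : ℕ) (x : ℝ) (hx : 0 ≤ x) :
    HasSum (fun k : ℕ => Wgb a n k x * ((k:ℝ)/((n:ℝ)+1))^m)
      (Real.exp (-(a * (x/(1+x)))) * (1/(1+x))^n * (1/((n:ℝ)+1))^m *
        (∑ s ∈ Finset.range (m+1), (m.choose s : ℝ) *
          ((∑' i, fA n (x/(1+x)) s i) * (∑' j, fB (a*(x/(1+x))) (m-s) j)))) := by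
  have hy := yabs_lt hx
  have h := (hasSum_master n m a hy).mul_left
    (Real.exp (-(a * (x/(1+x)))) * (1/(1+x))^n * (1/((n:ℝ)+1))^m)
  refine h.congr_fun fun k => ?_
  rw [Wgb_eq a n k x hx, div_pow]
  ring

lemma summable_W (a : ℝ) (n m : ℕ) (x : ℝ) (hx : 0 ≤ x) :
    Summable (fun k : ℕ => Wgb a n k x * ((k:ℝ)/((n:ℝ)+1))^m) :=
  (hasSum_W a n m x hx).summable

lemma nuMoment_eq (a : ℝ) (n m : ℕ) (x : ℝ) (hx : 0 ≤ x) :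
    nuMoment a n m x =
      Real.exp (-(a * (x/(1+x)))) * (1/(1+x))^n * (1/((n:ℝ)+1))^m *
        (∑ s ∈ Finset.range (m+1), (m.choose s : ℝ) *
          ((∑' i, fA n (x/(1+x)) s i) * (∑' j, fB (a*(x/(1+x))) (m-s) j))) :=
  (hasSum_W a n m x hx).tsum_eq

lemma pow_succ_sub_pow (k r : ℕ) :
    ((k:ℝ)+1)^(r+1) - (k:ℝ)^(r+1) =
      ∑ j ∈ Finset.range (r+1), ((r+1).choose j : ℝ) * (k:ℝ)^j := by
  have h := add_pow (k:ℝ) 1 (r+1)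
  simp only [one_pow, mul_one] at h
  rw [Finset.sum_range_succ, Nat.choose_self] at h
  push_cast at h
  calc ((k:ℝ)+1)^(r+1) - (k:ℝ)^(r+1)
      = ∑ j ∈ Finset.range (r+1), (k:ℝ)^j * ((r+1).choose j : ℝ) := by rw [h]; ring
    _ = ∑ j ∈ Finset.range (r+1), ((r+1).choose j : ℝ) * (k:ℝ)^j :=
        Finset.sum_congr rfl fun j _ => mul_comm _ _

lemma TMoment_formula (a : ℝ) (n r : ℕ) (x : ℝ) (hx : 0 ≤ x) :
    TMoment a n r x = (1 / ((r:ℝ) + 1)) *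
      ∑ j ∈ Finset.range (r + 1),
        ((r + 1).choose j : ℝ) * (1 / ((n:ℝ) + 1) ^ (r - j)) * nuMoment a n j x := by
  have hN : ((n:ℝ) + 1) ≠ 0 := by positivity
  have hr1 : ((r:ℝ) + 1) ≠ 0 := by positivity
  unfold TMoment Kgb
  have hptw : ∀ k : ℕ,
      Wgb a n k x * ∫ t in ((k:ℝ)/((n:ℝ)+1))..(((k:ℝ)+1)/((n:ℝ)+1)), t^r =
      ∑ j ∈ Finset.range (r+1),
        (((r+1).choose j : ℝ) * (1/((r:ℝ)+1)) * (1/((n:ℝ)+1)^(r-j)) * (1/((n:ℝ)+1))) *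
          (Wgb a n k x * ((k:ℝ)/((n:ℝ)+1))^j) := by
    intro k
    rw [integral_pow, div_pow, div_pow, div_sub_div_same, pow_succ_sub_pow,
      Finset.sum_div, Finset.sum_div, Finset.mul_sum]
    apply Finset.sum_congr rfl
    intro j hj
    have hjr : j ≤ r := Nat.lt_succ_iff.mp (Finset.mem_range.mp hj)
    have hexp : ((n:ℝ)+1)^(r-j) * ((n:ℝ)+1)^j = ((n:ℝ)+1)^r := by
      rw [← pow_add, Nat.sub_add_cancel hjr]
    have hNp : ((n:ℝ)+1)^j ≠ 0 := by positivity
    have hNr : ((n:ℝ)+1)^r ≠ 0 := by positivity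
    have hNrj : ((n:ℝ)+1)^(r-j) ≠ 0 := by positivity
    rw [div_pow, pow_succ]
    field_simp
    rw [← hexp]
    ring
  rw [tsum_congr hptw]
  rw [Summable.tsum_finsetSum (fun j _ => (summable_W a n j x hx).mul_left _)]
  rw [Finset.mul_sum, Finset.mul_sum]
  apply Finset.sum_congr rfl
  intro j hj
  rw [tsum_mul_left]
  have hnu : (∑' k : ℕ, Wgb a n k x * ((k:ℝ)/((n:ℝ)+1))^j) = nuMoment a n j x := rfl
  rw [hnu]
  field_simp

lemma hasSum_B0' (b : ℝ) : HasSum (fB b 0) (Real.exp b) := by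
  refine (hasSum_B0 b).congr_fun fun j => ?_
  simp [fB]

lemma nu0_eq (a : ℝ) (n : ℕ) (x : ℝ) (hx : 0 ≤ x) : nuMoment a n 0 x = 1 := by
  have hy := yabs_lt hx
  have hu : (1:ℝ) + x ≠ 0 := by positivity
  rw [nuMoment_eq a n 0 x hx, Finset.sum_range_one]
  rw [(hasSum_A0 n hy).tsum_eq, (hasSum_B0' (a*(x/(1+x)))).tsum_eq]
  rw [one_sub_y hx]
  have hX : Real.exp (a*(x/(1+x))) ≠ 0 := Real.exp_ne_zero _
  have hE : Real.exp (-(a * (x/(1+x)))) = (Real.exp (a*(x/(1+x))))⁻¹ := by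
    rw [← Real.exp_neg]
  have hun : ((1:ℝ)+x)^n ≠ 0 := by positivity
  rw [hE]
  simp only [one_div, inv_pow, Nat.choose_self, Nat.cast_one, inv_inv, pow_zero]
  field_simp

lemma nu1_eq (a : ℝ) (n : ℕ) (x : ℝ) (hx : 0 ≤ x) :
    nuMoment a n 1 x = (1/((n:ℝ)+1)) * ((n:ℝ)*x + a*x/(1+x)) := by
  have hy := yabs_lt hx
  have hu : (1:ℝ) + x ≠ 0 := by positivity
  rw [nuMoment_eq a n 1 x hx, Finset.sum_range_succ, Finset.sum_range_one]
  rw [(hasSum_A0 n hy).tsum_eq, (hasSum_A1 n hy).tsum_eq,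
    (hasSum_B0' (a*(x/(1+x)))).tsum_eq, (hasSum_B1 (a*(x/(1+x)))).tsum_eq]
  rw [one_sub_y hx]
  have hX : Real.exp (a*(x/(1+x))) ≠ 0 := Real.exp_ne_zero _
  have hE : Real.exp (-(a * (x/(1+x)))) = (Real.exp (a*(x/(1+x))))⁻¹ := by
    rw [← Real.exp_neg]
  have hun : ((1:ℝ)+x)^n ≠ 0 := by positivity
  have hN : ((n:ℝ)+1) ≠ 0 := by positivity
  rw [hE, pow_succ]
  simp only [one_div, inv_pow, inv_inv, pow_one, Nat.choose_self, Nat.choose_zero_right,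
    Nat.cast_one]
  field_simp
  ring

lemma nu2_eq (a : ℝ) (n : ℕ) (x : ℝ) (hx : 0 ≤ x) :
    nuMoment a n 2 x = (1/((n:ℝ)+1))^2 *
      ((n:ℝ)*((n:ℝ)+1)*x^2 + 2*(n:ℝ)*a*x^2/(1+x) + a^2*x^2/(1+x)^2
        + (n:ℝ)*x + a*x/(1+x)) := by
  have hy := yabs_lt hx
  have hu : (1:ℝ) + x ≠ 0 := by positivity
  rw [nuMoment_eq a n 2 x hx, Finset.sum_range_succ, Finset.sum_range_succ,
    Finset.sum_range_one]
  rw [(hasSum_A0 n hy).tsum_eq, (hasSum_A1 n hy).tsum_eq, (hasSum_A2 n hy).tsum_eq,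
    (hasSum_B0' (a*(x/(1+x)))).tsum_eq, (hasSum_B1 (a*(x/(1+x)))).tsum_eq,
    (hasSum_B2 (a*(x/(1+x)))).tsum_eq]
  rw [one_sub_y hx]
  have hX : Real.exp (a*(x/(1+x))) ≠ 0 := Real.exp_ne_zero _
  have hE : Real.exp (-(a * (x/(1+x)))) = (Real.exp (a*(x/(1+x))))⁻¹ := by
    rw [← Real.exp_neg]
  have hun : ((1:ℝ)+x)^n ≠ 0 := by positivity
  have hN : ((n:ℝ)+1) ≠ 0 := by positivity
  rw [hE]
  rw [show n+2 = (n+1)+1 from rfl, pow_succ ((1:ℝ)/(1+x)) (n+1), pow_succ ((1:ℝ)/(1+x)) n]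
  simp only [one_div, inv_pow, inv_inv, Nat.choose_self, Nat.choose_zero_right,
    Nat.cast_one]
  norm_num
  field_simp
  ring

/-- formula for the moments `T_{n,r}^a` and particular values. -/
theorem statement16 (a : ℝ) (ha : 0 ≤ a) (n : ℕ) :
    (∀ r : ℕ, ∀ x : ℝ, 0 ≤ x →
      TMoment a n r x = (1 / ((r : ℝ) + 1)) *
        ∑ j ∈ Finset.range (r + 1),
          ((r + 1).choose j : ℝ) * (1 / ((n : ℝ) + 1) ^ (r - j)) * nuMoment a n j x) ∧
    (∀ x : ℝ, 0 ≤ x → TMoment a n 0 x = 1) ∧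
    (∀ x : ℝ, 0 ≤ x →
      TMoment a n 1 x = (1 / ((n : ℝ) + 1)) * ((n : ℝ) * x + a * x / (1 + x) + 1 / 2)) ∧
    (∀ x : ℝ, 0 ≤ x →
      TMoment a n 2 x = (1 / ((n : ℝ) + 1) ^ 2) *
        ((n : ℝ) ^ 2 * x ^ 2 + (n : ℝ) * (x ^ 2 + 2 * x + 2 * a * x ^ 2 / (1 + x)) +
          a ^ 2 * x ^ 2 / (1 + x) ^ 2 + 2 * a * x / (1 + x) + 1 / 3)) := by
  refine ⟨fun r x hx => TMoment_formula a n r x hx, fun x hx => ?_, fun x hx => ?_,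
    fun x hx => ?_⟩
  · rw [TMoment_formula a n 0 x hx, Finset.sum_range_one, nu0_eq a n x hx]
    norm_num
  · have hu : (1:ℝ)+x ≠ 0 := by positivity
    have hN : ((n:ℝ)+1) ≠ 0 := by positivity
    rw [TMoment_formula a n 1 x hx, Finset.sum_range_succ, Finset.sum_range_one,
      nu0_eq a n x hx, nu1_eq a n x hx]
    norm_num
    field_simp
    ring
  · have hu : (1:ℝ)+x ≠ 0 := by positivity
    have hN : ((n:ℝ)+1) ≠ 0 := by positivity
    rw [TMoment_formula a n 2 x hx, Finset.sum_range_succ, Finset.sum_range_succ,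
      Finset.sum_range_one, nu0_eq a n x hx, nu1_eq a n x hx, nu2_eq a n x hx]
    norm_num
    field_simp
    ring
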